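/- Let n ≥ 1 and m ≥ 1, let θ : {0, …, n−1} → ℝ be a list of angles, and suppose {0, …, n−1} is partitioned into m consecutive blocks 0 = a₁ ≤ a₂ ≤ ⋯ ≤ a_{m+1} = n such that on each block {a_k, …, a_{k+1}−1} the sequence θ is monotone (nondecreasing or nonincreasing) and has oscillation max θ − min θ over the block at most L_k, where L_k ≥ 0 and Σ_{k=1}^{m} L_k = 2π. Then the cyclic sum of oriented triangle areas Σ_{i=0}^{n−1} (1/2) sin(θ((i+1) mod n) − θ(i)) is at most π + m/2. In particular, with m = 4G blocks this bound equals π(1 + 2G/π). -/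

import Mathlib

open Finset Real


/-- Combinatorial bound: if the indices `0, …, n-1` are partitioned into `m`
consecutive blocks `a 1 = 0 ≤ a 2 ≤ ⋯ ≤ a (m+1) = n`, on each block the angles
`θ` are monotone (nondecreasing or nonincreasing) with oscillation at most
`L k ≥ 0`, and `∑ L k = 2π`, then the cyclic sum of oriented triangle areas
`∑_{i=0}^{n-1} (1/2) sin (θ ((i+1) mod n) - θ i)` is at most `π + m / 2`. -/
theorem stmt_9 (n m : ℕ) (hn : 1 ≤ n) (hm : 1 ≤ m) (θ : ℕ → ℝ)
    (a : ℕ → ℕ) (ha1 : a 1 = 0) (ha2 : a (m + 1) = n)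
    (hamono : ∀ k, 1 ≤ k → k ≤ m → a k ≤ a (k + 1))
    (L : ℕ → ℝ) (hL0 : ∀ k, 1 ≤ k → k ≤ m → 0 ≤ L k)
    (hLsum : ∑ k ∈ Finset.Icc 1 m, L k = 2 * Real.pi)
    (hblockmono : ∀ k, 1 ≤ k → k ≤ m →
      (∀ i j, a k ≤ i → i ≤ j → j < a (k + 1) → θ i ≤ θ j) ∨
      (∀ i j, a k ≤ i → i ≤ j → j < a (k + 1) → θ j ≤ θ i))
    (hblockosc : ∀ k, 1 ≤ k → k ≤ m →
      ∀ i j, a k ≤ i → i < a (k + 1) → a k ≤ j → j < a (k + 1) →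
        θ i - θ j ≤ L k) :
    ∑ i ∈ Finset.range n, (1 / 2 : ℝ) * Real.sin (θ ((i + 1) % n) - θ i)
      ≤ Real.pi + m / 2 := by
  set f : ℕ → ℝ := fun i => (1 / 2 : ℝ) * Real.sin (θ ((i + 1) % n) - θ i) with hf
  -- monotone chain for a
  have hchain : ∀ p q, 1 ≤ p → p ≤ q → q ≤ m + 1 → a p ≤ a q := by
    intro p q hp hpq hq
    induction q with
    | zero => omega
    | succ q ih =>
      rcases Nat.lt_or_ge p (q+1) with h | h
      · exact le_trans (ih (by omega) (by omega)) (hamono q (by omega) (by omega))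
      · have : p = q + 1 := by omega
        subst this; exact le_rfl
  -- block bound
  have hblock : ∀ k, 1 ≤ k → k ≤ m →
      ∑ i ∈ Finset.Ico (a k) (a (k+1)), f i ≤ L k / 2 + 1 / 2 := by
    intro k hk1 hkm
    set s := a k with hs
    set t := a (k+1) with ht
    have hst : s ≤ t := hamono k hk1 hkm
    have htn : t ≤ n := by rw [← ha2]; exact hchain (k+1) (m+1) (by omega) (by omega) le_rfl
    rcases eq_or_lt_of_le hst with heq | hlt
    · rw [← heq]
      simp only [Finset.Ico_self, Finset.sum_empty]
      have := hL0 k hk1 hkm; linarith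
    · have ht1 : s ≤ t - 1 := by omega
      have htt : t = (t - 1) + 1 := by omega
      rw [htt, Finset.sum_Ico_succ_top ht1]
      have hlast : f (t - 1) ≤ 1 / 2 := by
        have := Real.sin_le_one (θ ((t - 1 + 1) % n) - θ (t - 1))
        simp only [hf]; linarith
      have hinner : ∑ i ∈ Finset.Ico s (t-1), f i ≤ L k / 2 := by
        have hmod : ∀ i ∈ Finset.Ico s (t-1), (i + 1) % n = i + 1 := by
          intro i hi
          rw [Finset.mem_Ico] at hi
          exact Nat.mod_eq_of_lt (by omega)
        have htel : ∑ i ∈ Finset.Ico s (t-1), (θ (i+1) - θ i) = θ (t-1) - θ s := by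
          rw [Finset.sum_Ico_eq_sum_range]
          have h := Finset.sum_range_sub (fun i => θ (s + i)) (t - 1 - s)
          rw [show s + (t - 1 - s) = t - 1 by omega] at h
          exact h
        rcases hblockmono k hk1 hkm with hmono | hmono
        · have hstep : ∀ i ∈ Finset.Ico s (t-1), f i ≤ (1/2) * (θ (i+1) - θ i) := by
            intro i hi
            have hi' := Finset.mem_Ico.mp hi
            have hnn : 0 ≤ θ (i+1) - θ i := by
              have := hmono i (i+1) hi'.1 (by omega) (by omega)
              linarith
            have := Real.sin_le hnn
            simp only [hf, hmod i hi]
            linarith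
          calc ∑ i ∈ Finset.Ico s (t-1), f i
              ≤ ∑ i ∈ Finset.Ico s (t-1), (1/2) * (θ (i+1) - θ i) :=
                Finset.sum_le_sum hstep
            _ = (1/2) * (θ (t-1) - θ s) := by rw [← Finset.mul_sum, htel]
            _ ≤ L k / 2 := by
                have := hblockosc k hk1 hkm (t-1) s (by omega) (by omega) le_rfl hlt
                linarith
        · have hstep : ∀ i ∈ Finset.Ico s (t-1), f i ≤ (1/2) * (θ i - θ (i+1)) := by
            intro i hi
            have hi' := Finset.mem_Ico.mp hi
            have hnp : θ (i+1) - θ i ≤ 0 := by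
              have := hmono i (i+1) hi'.1 (by omega) (by omega)
              linarith
            have h1 : Real.sin (θ (i+1) - θ i) ≤ |θ (i+1) - θ i| :=
              le_trans (le_abs_self _) (Real.abs_sin_le_abs)
            rw [abs_of_nonpos hnp] at h1
            simp only [hf, hmod i hi]
            linarith
          calc ∑ i ∈ Finset.Ico s (t-1), f i
              ≤ ∑ i ∈ Finset.Ico s (t-1), (1/2) * (θ i - θ (i+1)) :=
                Finset.sum_le_sum hstep
            _ = (1/2) * (θ s - θ (t-1)) := by
                rw [← Finset.mul_sum]
                have : ∑ i ∈ Finset.Ico s (t-1), (θ i - θ (i+1))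
                    = -∑ i ∈ Finset.Ico s (t-1), (θ (i+1) - θ i) := by
                  rw [← Finset.sum_neg_distrib]; congr 1; ext i; ring
                rw [this, htel]; ring
            _ ≤ L k / 2 := by
                have := hblockosc k hk1 hkm s (t-1) le_rfl hlt (by omega) (by omega)
                linarith
      linarith
  -- assemble
  have key : ∀ M, M ≤ m → ∑ i ∈ Finset.Ico (a 1) (a (M+1)), f i
      ≤ ∑ k ∈ Finset.Icc 1 M, (L k / 2 + 1 / 2) := by
    intro M
    induction M with
    | zero => intro _; simp
    | succ M ih =>
      intro hM
      have h1 : a 1 ≤ a (M+1) := hchain 1 (M+1) le_rfl (by omega) (by omega)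
      have h2 : a (M+1) ≤ a (M+2) := hamono (M+1) (by omega) hM
      rw [← Finset.sum_Ico_consecutive f h1 h2]
      rw [Finset.sum_Icc_succ_top (by omega : 1 ≤ M + 1)]
      have := hblock (M+1) (by omega) hM
      have := ih (by omega)
      linarith
  have hfin := key m le_rfl
  rw [ha1, ha2] at hfin
  have hsum2 : ∑ k ∈ Finset.Icc 1 m, (L k / 2 + 1 / 2)
      = Real.pi + m / 2 := by
    rw [Finset.sum_add_distrib]
    have h1 : ∑ k ∈ Finset.Icc 1 m, L k / 2 = Real.pi := by
      rw [← Finset.sum_div, hLsum]; ring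
    have h2 : ∑ k ∈ Finset.Icc 1 m, (1/2 : ℝ) = m / 2 := by
      rw [Finset.sum_const, Nat.card_Icc]
      simp; ring
    rw [h1, h2]
  rw [hsum2] at hfin
  simpa [hf] using hfin
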